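/- arXiv:2310.01317 — 5 statements merged into one kernel-verified Lean document; each statement's English description precedes it below -/
import Mathlib

section
/- Let n = 2m and a, b ∈ (𝔽_{2^n})^* with Tr₁ⁿ(b/a²) = 0, where Tr₁ⁿ is the absolute trace of 𝔽_{2^n}. Then the quadratic x² + ax + b = 0 has both of its solutions in μ_{2^m+1} if and only if b = a^{1−2^m} and Tr₁^m(b/a²) = 1, where Tr₁^m denotes the absolute trace of the subfield 𝔽_{2^m} (note b/a² ∈ 𝔽_{2^m} in that case). -/
/-- The absolute trace of a field of characteristic 2, as the sum of Frobenius powers. -/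
def FTr (F : Type*) [Field F] (k : ℕ) (x : F) : F :=
  ∑ i ∈ Finset.range k, x ^ 2 ^ i

section Aux

variable {F : Type*} [Field F]

/-- Telescoping: FTr of an Artin-Schreier value. -/
lemma FTr_AS [CharP F 2] (k : ℕ) (y : F) :
    FTr F k (y ^ 2 + y) = y ^ (2 ^ k) + y := by
  induction k with
  | zero => simp [FTr, CharTwo.add_self_eq_zero]
  | succ k ih =>
    rw [FTr, Finset.sum_range_succ, ← FTr, ih, add_pow_char_pow (y ^ 2) y 2 k,
      ← pow_mul]
    have h2 : (2 : F) = 0 := CharTwo.two_eq_zero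
    have hexp : 2 * 2 ^ k = 2 ^ (k + 1) := by rw [pow_succ]; ring
    rw [hexp]
    linear_combination (y ^ (2 ^ k)) * h2

/-- Existence of Artin-Schreier roots when the trace vanishes. -/
lemma exists_AS [Fintype F] [CharP F 2] (k : ℕ) (hk : 1 ≤ k)
    (hcard : Fintype.card F = 2 ^ k) (c : F) (hc : FTr F k c = 0) :
    ∃ y : F, y ^ 2 + y = c := by
  classical
  set f : F → F := fun y => y ^ 2 + y with hf
  set S : Finset F := Finset.univ.image f with hS
  set T : Finset F := Finset.univ.filter (fun t => FTr F k t = 0) with hT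
  have h2 : (2 : F) = 0 := CharTwo.two_eq_zero
  -- S ⊆ T
  have hST : S ⊆ T := by
    intro t ht
    rw [hS, Finset.mem_image] at ht
    obtain ⟨y, _, hy⟩ := ht
    rw [hT, Finset.mem_filter]
    refine ⟨Finset.mem_univ _, ?_⟩
    rw [← hy]
    show FTr F k (y ^ 2 + y) = 0
    rw [FTr_AS, ← hcard, FiniteField.pow_card]
    linear_combination y * h2
  -- T.card ≤ 2 ^ (k-1)
  have hTcard : T.card ≤ 2 ^ (k - 1) := by
    set p : Polynomial F := ∑ i ∈ Finset.range k, Polynomial.X ^ 2 ^ i with hp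
    have hcoeff : p.coeff (2 ^ (k - 1)) = 1 := by
      rw [hp, Polynomial.finset_sum_coeff]
      rw [Finset.sum_eq_single (k - 1)]
      · simp
      · intro i hi hne
        rw [Polynomial.coeff_X_pow, if_neg]
        intro h
        exact hne (Nat.pow_right_injective (le_refl 2) h.symm)
      · intro h
        exact absurd (Finset.mem_range.mpr (by omega)) h
    have hpne : p ≠ 0 := fun h => by simp [h] at hcoeff
    have hdeg : p.natDegree ≤ 2 ^ (k - 1) := by
      refine Polynomial.natDegree_sum_le_of_forall_le _ _ (fun i hi => ?_)
      rw [Polynomial.natDegree_X_pow]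
      exact Nat.pow_le_pow_right (by norm_num) (by
        have := Finset.mem_range.mp hi; omega)
    have hsub : T ⊆ p.roots.toFinset := by
      intro t ht
      rw [hT, Finset.mem_filter] at ht
      rw [Multiset.mem_toFinset, Polynomial.mem_roots hpne]
      show Polynomial.eval t p = 0
      rw [hp, Polynomial.eval_finset_sum]
      simpa [FTr] using ht.2
    calc T.card ≤ p.roots.toFinset.card := Finset.card_le_card hsub
      _ ≤ Multiset.card p.roots := p.roots.toFinset_card_le
      _ ≤ p.natDegree := p.card_roots'
      _ ≤ 2 ^ (k - 1) := hdeg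
  -- 2 ^ k ≤ 2 * S.card
  have hScard : 2 ^ k ≤ 2 * S.card := by
    have hsub : (Finset.univ : Finset F) ⊆ S.biUnion
        (fun s => Finset.univ.filter (fun y => f y = s)) := by
      intro y _
      rw [Finset.mem_biUnion]
      exact ⟨f y, Finset.mem_image_of_mem f (Finset.mem_univ y),
        Finset.mem_filter.mpr ⟨Finset.mem_univ y, rfl⟩⟩
    have hfib : ∀ s : F, (Finset.univ.filter (fun y => f y = s)).card ≤ 2 := by
      intro s
      rcases (Finset.univ.filter (fun y => f y = s)).eq_empty_or_nonempty with he | ⟨y0, hy0⟩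
      · rw [he]; simp
      · have hy0' : f y0 = s := (Finset.mem_filter.mp hy0).2
        have hsub2 : (Finset.univ.filter (fun y => f y = s)) ⊆ {y0, y0 + 1} := by
          intro y hy
          have hy' : f y = s := (Finset.mem_filter.mp hy).2
          have hdiff : (y + y0) * (y + y0 + 1) = 0 := by
            have := hy'.trans hy0'.symm
            rw [hf] at this
            linear_combination this + (y * y0 + y0 ^ 2 + y0) * h2
          rcases mul_eq_zero.mp hdiff with h0 | h0
          · have : y = y0 := by linear_combination h0 - y0 * h2
            simp [this]
          · have : y = y0 + 1 := by linear_combination h0 - (y0 + 1) * h2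
            simp [this]
        calc (Finset.univ.filter (fun y => f y = s)).card
            ≤ ({y0, y0 + 1} : Finset F).card := Finset.card_le_card hsub2
          _ ≤ 2 := Finset.card_insert_le _ _ |>.trans (by simp)
    calc (2 : ℕ) ^ k = Fintype.card F := hcard.symm
      _ = (Finset.univ : Finset F).card := Finset.card_univ.symm
      _ ≤ (S.biUnion (fun s => Finset.univ.filter (fun y => f y = s))).card :=
          Finset.card_le_card hsub
      _ ≤ ∑ s ∈ S, (Finset.univ.filter (fun y => f y = s)).card :=
          Finset.card_biUnion_le
      _ ≤ ∑ _s ∈ S, 2 := Finset.sum_le_sum (fun s _ => hfib s)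
      _ = 2 * S.card := by rw [Finset.sum_const, smul_eq_mul, mul_comm]
  -- conclude S = T
  have hkk : (2 : ℕ) ^ k = 2 * 2 ^ (k - 1) := by
    rw [← pow_succ']
    congr 1
    omega
  have hcardle : T.card ≤ S.card := by omega
  have hSeqT : S = T := Finset.eq_of_subset_of_card_le hST hcardle
  have hcT : c ∈ T := Finset.mem_filter.mpr ⟨Finset.mem_univ _, hc⟩
  rw [← hSeqT, hS, Finset.mem_image] at hcT
  obtain ⟨y, _, hy⟩ := hcT
  exact ⟨y, hy⟩

end Aux

/-- Both solutions of x^2 + ax + b = 0 lie in μ_{2^m+1} iff b = a^{1-2^m} and Tr_1^m(b/a^2) = 1. -/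
theorem stmt_4 (m : ℕ) (hm : 1 ≤ m) (F : Type*) [Field F] [Fintype F]
    (hF : Fintype.card F = 2 ^ (2 * m))
    (a b : F) (ha : a ≠ 0) (hb : b ≠ 0)
    (htr : FTr F (2 * m) (b / a ^ 2) = 0) :
    (∀ x : F, x ^ 2 + a * x + b = 0 → x ^ (2 ^ m + 1) = 1) ↔
      (b = a ^ ((1 : ℤ) - 2 ^ m) ∧ FTr F m (b / a ^ 2) = 1) := by
  -- characteristic 2
  have hchar : ringChar F = 2 := by
    have hp : (ringChar F).Prime := CharP.char_is_prime F (ringChar F)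
    obtain ⟨n, hn⟩ := FiniteField.card F (ringChar F)
    have hd : ringChar F ∣ 2 ^ (2 * m) := by
      rw [← hF, hn.2]
      exact dvd_pow_self _ (by exact_mod_cast n.pos.ne')
    exact (Nat.prime_dvd_prime_iff_eq hp Nat.prime_two).mp (hp.dvd_of_dvd_pow hd)
  haveI : CharP F 2 := hchar ▸ ringChar.charP F
  have h2 : (2 : F) = 0 := CharTwo.two_eq_zero
  have ha2 : a ^ 2 ≠ 0 := pow_ne_zero 2 ha
  have haq : a ^ (2 ^ m) ≠ 0 := pow_ne_zero _ ha
  have hzpow : a ^ ((1 : ℤ) - 2 ^ m) = a / a ^ (2 ^ m) := by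
    have hcast : ((1 : ℤ) - 2 ^ m) = (1 : ℤ) - ((2 ^ m : ℕ) : ℤ) := by push_cast; ring
    rw [hcast, zpow_sub₀ ha, zpow_one, zpow_natCast]
  constructor
  · -- forward
    intro h
    obtain ⟨y, hy⟩ := exists_AS (2 * m) (by omega) hF (b / a ^ 2) htr
    have hc0 : b / a ^ 2 ≠ 0 := div_ne_zero hb ha2
    have hy0 : y ≠ 0 := by
      intro h0
      apply hc0
      rw [← hy, h0]
      ring
    have hy1 : y + 1 ≠ 0 := by
      intro h0
      apply hc0
      have hyval : y = 1 := by linear_combination h0 - h2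
      rw [← hy, hyval]
      linear_combination h2
    have hab : a ^ 2 * (y ^ 2 + y) = b := by
      rw [hy]
      field_simp
    have root1 : (a * y) ^ 2 + a * (a * y) + b = 0 := by
      linear_combination hab + b * h2
    have root2 : (a * (y + 1)) ^ 2 + a * (a * (y + 1)) + b = 0 := by
      linear_combination hab + (b + a ^ 2 * y + a ^ 2) * h2
    have hx1 := h (a * y) root1
    have hx2 := h (a * (y + 1)) root2
    have hx1ne : a * y ≠ 0 := mul_ne_zero ha hy0
    have hx2ne : a * (y + 1) ≠ 0 := mul_ne_zero ha hy1
    rw [pow_succ] at hx1 hx2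
    -- b = a^{1-q}
    have h1inv : (a * y) ^ (2 ^ m) = (a * y)⁻¹ := eq_inv_of_mul_eq_one_left hx1
    have h2inv : (a * (y + 1)) ^ (2 ^ m) = (a * (y + 1))⁻¹ := eq_inv_of_mul_eq_one_left hx2
    have hsum : a * y + a * (y + 1) = a := by linear_combination a * y * h2
    have hprod : (a * y) * (a * (y + 1)) = b := by
      linear_combination hab
    have haqeq : a ^ (2 ^ m) = a / b := by
      calc a ^ (2 ^ m) = (a * y + a * (y + 1)) ^ (2 ^ m) := by rw [hsum]
        _ = (a * y) ^ (2 ^ m) + (a * (y + 1)) ^ (2 ^ m) :=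
            add_pow_char_pow (a * y) (a * (y + 1)) 2 m
        _ = (a * y)⁻¹ + (a * (y + 1))⁻¹ := by rw [h1inv, h2inv]
        _ = (a * y + a * (y + 1)) / ((a * y) * (a * (y + 1))) := inv_add_inv hx1ne hx2ne
        _ = a / b := by rw [hsum, hprod]
    have haqb : a ^ (2 ^ m) * b = a := by
      rw [haqeq]
      field_simp
    constructor
    · rw [hzpow, eq_div_iff haq]
      linear_combination haqb
    · -- FTr m (b/a^2) = 1
      have h3 : a ^ (2 ^ m) * y ^ (2 ^ m) * (a * y) = 1 := by
        rw [← mul_pow]; exact hx1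
      have h4 : a ^ 2 * (y ^ (2 ^ m) * y) = b := by
        linear_combination b * h3 - (a * y ^ (2 ^ m) * y) * haqb
      have h6 : y ^ (2 ^ m) * y = (y + 1) * y := by
        have h5 := mul_left_cancel₀ ha2 (h4.trans hab.symm)
        linear_combination h5
      have key : y ^ (2 ^ m) = y + 1 := mul_right_cancel₀ hy0 h6
      rw [← hy, FTr_AS, key]
      linear_combination y * h2
  · -- reverse
    rintro ⟨hb1, h1⟩ x hx
    have haqb : a ^ (2 ^ m) * b = a := by
      rw [hb1, hzpow]
      field_simp
    have hy : (x / a) ^ 2 + (x / a) = b / a ^ 2 := by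
      field_simp
      linear_combination hx - b * h2
    set y := x / a with hydef
    have hyx : x = a * y := by
      rw [hydef]
      field_simp
    have hab : a ^ 2 * (y ^ 2 + y) = b := by
      rw [hy]
      field_simp
    rw [← hy, FTr_AS] at h1
    have key : y ^ (2 ^ m) = y + 1 := by linear_combination h1 - y * h2
    rw [hyx, pow_succ, mul_pow, key]
    have h7 : a * (a ^ (2 ^ m) * (y + 1) * (a * y)) = a * 1 := by
      rw [mul_one]
      linear_combination a ^ (2 ^ m) * hab + haqb
    exact mul_left_cancel₀ ha h7
end

section
/- Let n = 2m, q = 2^m, and c ∈ 𝔽_q^*. For b ∈ (𝔽_{q²})^*, the equation z² + b^{−1}c·z + b^{q−1} = 0 has exactly 2 solutions in μ_{q+1} if Tr₁^m(b^{q+1} c^{−2}) = 1, and exactly 0 solutions in μ_{q+1} if Tr₁^m(b^{q+1} c^{−2}) = 0. -/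
section Aux

variable (F : Type*) [Field F] [CharP F 2]

/-- Frobenius iterates of a root of an Artin–Schreier equation. -/
lemma AS_pow {F} [Field F] [CharP F 2] (a w : F) (hw : w ^ 2 = w + a) (i : ℕ) :
    w ^ 2 ^ i = w + FTr F i a := by
  induction i with
  | zero => simp [FTr]
  | succ i ih =>
    have : w ^ 2 ^ (i + 1) = (w ^ 2 ^ i) ^ 2 := by
      rw [← pow_mul, pow_succ]
    rw [this, ih, CharTwo.add_sq, hw]
    simp only [FTr]
    rw [CharTwo.sum_sq, Finset.sum_range_succ' (fun j => a ^ 2 ^ j) i]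
    have hc : ∀ j ∈ Finset.range i, (a ^ 2 ^ j) ^ 2 = a ^ 2 ^ (j + 1) := by
      intro j _
      rw [← pow_mul, pow_succ]
    rw [Finset.sum_congr rfl hc]
    simp only [pow_zero, pow_one]
    ring

lemma FTr_sq {F} [Field F] [CharP F 2] (n : ℕ) (x : F) (hx : x ^ 2 ^ n = x) :
    FTr F n x ^ 2 = FTr F n x := by
  unfold FTr
  rw [CharTwo.sum_sq]
  have key : ∀ j ∈ Finset.range n, (x ^ 2 ^ j) ^ 2 = x ^ 2 ^ (j + 1) := by
    intro j _
    rw [← pow_mul, pow_succ]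
  rw [Finset.sum_congr rfl key]
  have h1 : ∑ j ∈ Finset.range (n + 1), x ^ 2 ^ j
      = ∑ j ∈ Finset.range n, x ^ 2 ^ (j + 1) + x ^ 2 ^ 0 :=
    Finset.sum_range_succ' _ n
  have h2 : ∑ j ∈ Finset.range (n + 1), x ^ 2 ^ j
      = ∑ j ∈ Finset.range n, x ^ 2 ^ j + x ^ 2 ^ n := Finset.sum_range_succ _ n
  have := h1.symm.trans h2
  rw [hx] at this
  simp only [pow_zero, pow_one] at this
  -- this : ∑ j ∈ range n, x ^ 2 ^ (j+1) + x = ∑ j ∈ range n, x ^ 2 ^ j + x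
  have := add_right_cancel this
  rw [this]

/-- Existence of an element of absolute trace 1. -/
lemma exists_FTr_one {F} [Field F] [Fintype F] [CharP F 2] (n : ℕ) (hn : 1 ≤ n)
    (hcard : Fintype.card F = 2 ^ n) : ∃ δ : F, FTr F n δ = 1 := by
  classical
  -- first, some element with nonzero trace
  have hpow : ∀ x : F, x ^ 2 ^ n = x := by
    intro x
    have := FiniteField.pow_card x
    rwa [hcard] at this
  by_contra hno
  push_neg at hno
  have hall : ∀ x : F, FTr F n x = 0 := by
    intro x
    have h1 := FTr_sq n x (hpow x)
    by_contra h0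
    exact hno x (mul_left_cancel₀ h0 (by rw [← sq, h1, mul_one]))
  -- polynomial argument
  set P : Polynomial F := ∑ i ∈ Finset.range n, Polynomial.X ^ 2 ^ i with hP
  have hPeval : ∀ x : F, P.eval x = 0 := by
    intro x
    have : P.eval x = FTr F n x := by
      rw [hP, Polynomial.eval_finset_sum]
      simp [FTr]
    rw [this, hall]
  have hPdeg : P.natDegree ≤ 2 ^ (n - 1) := by
    apply Polynomial.natDegree_sum_le_of_forall_le
    intro i hi
    rw [Polynomial.natDegree_X_pow]
    have hi' : i < n := Finset.mem_range.mp hi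
    exact Nat.pow_le_pow_right (by norm_num) (by omega)
  have hPne : P ≠ 0 := by
    intro h0
    have hc : P.coeff 1 = 1 := by
      rw [hP, Polynomial.finset_sum_coeff]
      rw [Finset.sum_eq_single 0]
      · norm_num [Polynomial.coeff_X_pow]
      · intro i hi hine
        rw [Polynomial.coeff_X_pow]
        have h1 : 1 < 2 ^ i := Nat.one_lt_two_pow_iff.mpr hine
        rw [if_neg (by omega)]
      · intro h
        exact absurd (Finset.mem_range.mpr (by omega)) h
    rw [h0] at hc
    simp at hc
  apply hPne
  apply Polynomial.eq_zero_of_natDegree_lt_card_of_eval_eq_zero P Function.injective_id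
    (fun x => hPeval x)
  calc P.natDegree ≤ 2 ^ (n - 1) := hPdeg
    _ < 2 ^ n := Nat.pow_lt_pow_right (by norm_num) (by omega)
    _ = Fintype.card F := hcard.symm

/-- Artin–Schreier: trace zero elements are of the form w^2 + w. -/
lemma AS_surj {F} [Field F] [CharP F 2] (n : ℕ) (hn : 1 ≤ n) (δ a : F)
    (hδn : δ ^ 2 ^ n = δ) (hδ : FTr F n δ = 1) (ha : FTr F n a = 0) :
    ∃ w : F, w ^ 2 + w = a := by
  classical
  set T : ℕ → F := fun j => ∑ k ∈ Finset.range j, a ^ 2 ^ k with hT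
  set W : ℕ → F := fun N => ∑ j ∈ Finset.range N, δ ^ 2 ^ j * T j with hW
  have hTsq : ∀ j, (T j) ^ 2 = T (j + 1) + a := by
    intro j
    rw [hT]
    simp only
    rw [CharTwo.sum_sq]
    have : ∀ k ∈ Finset.range j, (a ^ 2 ^ k) ^ 2 = a ^ 2 ^ (k + 1) := by
      intro k _
      rw [← pow_mul, pow_succ]
    rw [Finset.sum_congr rfl this]
    have h1 : ∑ k ∈ Finset.range (j + 1), a ^ 2 ^ k
        = ∑ k ∈ Finset.range j, a ^ 2 ^ (k + 1) + a ^ 2 ^ 0 := Finset.sum_range_succ' _ j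
    rw [h1]
    simp only [pow_zero, pow_one]
    rw [add_assoc, CharTwo.add_self_eq_zero, add_zero]
  have key : ∀ N, 1 ≤ N → W N ^ 2 + W N
      = a * (∑ j ∈ Finset.Ico 1 N, δ ^ 2 ^ j) + δ ^ 2 ^ N * (T N + a) := by
    intro N
    induction N with
    | zero => omega
    | succ N ih =>
      intro _
      have h20 : (2 : F) = 0 := CharTwo.two_eq_zero
      rcases Nat.eq_or_lt_of_le (Nat.one_le_iff_ne_zero.mpr (Nat.succ_ne_zero N)) with h1 | h1
      · -- N + 1 = 1, i.e. N = 0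
        have hN0 : N = 0 := by omega
        subst hN0
        have hW1 : W 1 = 0 := by simp [hW, hT]
        have hT1 : T 1 = a := by simp [hT]
        rw [hW1, hT1]
        simp [CharTwo.add_self_eq_zero]
      · have hN1 : 1 ≤ N := by omega
        have ihN := ih hN1
        have hWs : W (N + 1) = W N + δ ^ 2 ^ N * T N := Finset.sum_range_succ _ N
        rw [hWs, CharTwo.add_sq, mul_pow, ← pow_mul, ← pow_succ, hTsq N]
        have hIco : ∑ j ∈ Finset.Ico 1 (N + 1), δ ^ 2 ^ j
            = (∑ j ∈ Finset.Ico 1 N, δ ^ 2 ^ j) + δ ^ 2 ^ N := by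
          rw [Finset.sum_Ico_succ_top hN1]
        have hTs : T (N + 1) = T N + a ^ 2 ^ N := Finset.sum_range_succ _ N
        rw [hIco, hTs]
        linear_combination ihN + (δ ^ 2 ^ N * T N) * h20
  refine ⟨W n, ?_⟩
  have h20 : (2 : F) = 0 := CharTwo.two_eq_zero
  have hkey := key n hn
  rw [hδn] at hkey
  have hTn : T n = 0 := ha
  have hIco2 : ∑ j ∈ Finset.Ico 1 n, δ ^ 2 ^ j = 1 + δ := by
    have h0 : ∑ j ∈ Finset.Ico 0 n, δ ^ 2 ^ j
        = δ ^ 2 ^ 0 + ∑ j ∈ Finset.Ico 1 n, δ ^ 2 ^ j :=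
      Finset.sum_eq_sum_Ico_succ_bot (by omega) _
    have hδ' : (1 : F) = δ ^ 2 ^ 0 + ∑ j ∈ Finset.Ico 1 n, δ ^ 2 ^ j := by
      rw [← h0, ← hδ, FTr, Finset.range_eq_Ico]
    simp only [pow_zero, pow_one] at hδ'
    linear_combination -hδ' - δ * h20
  rw [hTn, hIco2] at hkey
  linear_combination hkey + (a * δ) * h20

end Aux

/-- z^2 + b⁻¹c z + b^{q-1} = 0 has 2 solutions in μ_{q+1} if Tr_1^m(b^{q+1}c^{-2}) = 1,
and 0 solutions if Tr_1^m(b^{q+1}c^{-2}) = 0. -/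
theorem stmt_5 (m : ℕ) (hm : 1 ≤ m) (F : Type*) [Field F] [Fintype F]
    (hF : Fintype.card F = (2 ^ m) ^ 2)
    (b c : F) (hb : b ≠ 0) (hc : c ≠ 0) (hcq : c ^ (2 ^ m) = c) :
    (FTr F m (b ^ (2 ^ m + 1) * (c ^ 2)⁻¹) = 1 →
        {z : F | z ^ (2 ^ m + 1) = 1 ∧
          z ^ 2 + b⁻¹ * c * z + b ^ (2 ^ m - 1) = 0}.ncard = 2) ∧
      (FTr F m (b ^ (2 ^ m + 1) * (c ^ 2)⁻¹) = 0 →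
        {z : F | z ^ (2 ^ m + 1) = 1 ∧
          z ^ 2 + b⁻¹ * c * z + b ^ (2 ^ m - 1) = 0}.ncard = 0) := by
  classical
  set q : ℕ := 2 ^ m with hq
  -- characteristic 2
  have hcard : Fintype.card F = 2 ^ (2 * m) := by
    rw [hF, ← pow_mul, Nat.mul_comm]
  haveI : Fact (Nat.Prime 2) := ⟨Nat.prime_two⟩
  have hdvd : (2 : ℕ) ∣ ringChar F := by
    rw [prime_dvd_char_iff_dvd_card, hcard]
    exact dvd_pow_self 2 (by omega)
  have hring : ringChar F = 2 := by
    have hprime := CharP.char_is_prime F (ringChar F)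
    exact ((Nat.prime_dvd_prime_iff_eq Nat.prime_two hprime).mp hdvd).symm
  haveI hchar2 : CharP F 2 := by
    rw [← hring]; exact ringChar.charP F
  have h20 : (2 : F) = 0 := CharTwo.two_eq_zero
  have hpow : ∀ x : F, x ^ 2 ^ (2 * m) = x := by
    intro x
    have := FiniteField.pow_card x
    rwa [hcard] at this
  have hq2 : 2 ≤ q := by
    rw [hq]; calc (2:ℕ) = 2 ^ 1 := by norm_num
                  _ ≤ 2 ^ m := Nat.pow_le_pow_right (by norm_num) hm
  -- a := b^{q+1} c^{-2}
  set a : F := b ^ (q + 1) * (c ^ 2)⁻¹ with ha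
  have ha0 : a ≠ 0 := by
    rw [ha]
    exact mul_ne_zero (pow_ne_zero _ hb) (inv_ne_zero (pow_ne_zero _ hc))
  -- b^{q^2} = b
  have hbq2 : b ^ (q * q) = b := by
    have hqq : q * q = 2 ^ (2 * m) := by rw [hq, ← pow_add, two_mul]
    rw [hqq]
    exact hpow b
  -- a is in F_q : a^q = a
  have haq : a ^ q = a := by
    rw [ha, mul_pow, ← pow_mul]
    have h1 : b ^ ((q + 1) * q) = b ^ (q + 1) := by
      have : (q + 1) * q = q * q + q := by ring
      rw [this, pow_add, hbq2, ← pow_succ']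
    have h2 : ((c ^ 2)⁻¹) ^ q = (c ^ 2)⁻¹ := by
      have hc2 : (c ^ 2) ^ q = c ^ 2 := by
        rw [← pow_mul, mul_comm, pow_mul, hcq]
      rw [inv_pow, hc2]
    rw [h1, h2]
  -- FTr over 2m of a is zero
  have haqm : a ^ 2 ^ m = a := by rw [← hq]; exact haq
  have haFTr2m : FTr F (2 * m) a = 0 := by
    rw [FTr, two_mul, Finset.sum_range_add]
    have hcg : ∀ i ∈ Finset.range m, a ^ 2 ^ (m + i) = a ^ 2 ^ i := by
      intro i _
      have e : (2 : ℕ) ^ (m + i) = 2 ^ m * 2 ^ i := pow_add 2 m i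
      rw [e, pow_mul, haqm]
    rw [Finset.sum_congr rfl hcg]
    exact CharTwo.add_self_eq_zero _
  -- key: any w with w^2 = w + a has w^{2^m} = w + FTr F m a
  have hfrob : ∀ w : F, w ^ 2 = w + a → w ^ q = w + FTr F m a := by
    intro w hw
    rw [hq]
    exact AS_pow a w hw m
  -- the transformation between z and w
  have hbc : b⁻¹ * c ≠ 0 := mul_ne_zero (inv_ne_zero hb) hc
  have hbcq1 : (b⁻¹ * c) ^ (q + 1) = (b ^ (q + 1))⁻¹ * c ^ 2 := by
    rw [mul_pow, inv_pow]
    congr 1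
    rw [pow_succ, hcq, sq]
  have hbq1 : b ^ (q - 1) * b ^ 2 = b ^ (q + 1) := by
    rw [← pow_add]
    congr 1
    omega
  -- auxiliary algebraic identities
  have hβa : (b⁻¹ * c) ^ 2 * a = b ^ (q - 1) := by
    rw [ha]
    field_simp
    linear_combination (-1 : F) * hbq1
  have hmemq : ∀ v : F, v ^ 2 + v = a →
      (b⁻¹ * c * v) ^ 2 + b⁻¹ * c * (b⁻¹ * c * v) + b ^ (q - 1) = 0 := by
    intro v hv
    have h1 : (b⁻¹ * c * v) ^ 2 + b⁻¹ * c * (b⁻¹ * c * v) = (b⁻¹ * c) ^ 2 * (v ^ 2 + v) := by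
      ring
    rw [h1, hv, hβa]
    exact CharTwo.add_self_eq_zero _
  have hmemn : ∀ v : F, v ^ (q + 1) = a → (b⁻¹ * c * v) ^ (q + 1) = 1 := by
    intro v hv
    rw [mul_pow, hbcq1, hv, ha]
    field_simp
  constructor
  · -- trace one case: two solutions
    intro htr
    obtain ⟨δ, hδ⟩ := exists_FTr_one (2 * m) (by omega) hcard
    obtain ⟨w, hw⟩ := AS_surj (2 * m) (by omega) δ a (hpow δ) hδ haFTr2m
    have hw2 : w ^ 2 = w + a := by
      have h2 := CharTwo.add_self_eq_zero w
      linear_combination hw - h2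
    have hwq : w ^ q = w + 1 := by rw [hfrob w hw2, htr]
    set z₁ : F := b⁻¹ * c * w with hz₁
    set z₂ : F := b⁻¹ * c * (w + 1) with hz₂
    have hwq1 : w ^ (q + 1) = a := by
      rw [pow_succ, hwq]
      linear_combination hw
    have hw1q1 : (w + 1) ^ (q + 1) = a := by
      have hwq' : w ^ 2 ^ m = w + 1 := by rw [← hq]; exact hwq
      have hw1q : (w + 1) ^ q = w := by
        rw [hq, add_pow_char_pow, hwq', one_pow]
        linear_combination CharTwo.add_self_eq_zero (1 : F)
      rw [pow_succ, hw1q]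
      linear_combination hw
    have hw1sum : (w + 1) ^ 2 + (w + 1) = a := by
      linear_combination hw + (w + 1) * h20
    have hSeq : {z : F | z ^ (q + 1) = 1 ∧
        z ^ 2 + b⁻¹ * c * z + b ^ (q - 1) = 0} = {z₁, z₂} := by
      ext z
      simp only [Set.mem_setOf_eq, Set.mem_insert_iff, Set.mem_singleton_iff]
      constructor
      · rintro ⟨hz1, hz2⟩
        have hfactor : (z + z₁) * (z + z₂)
            = z ^ 2 + b⁻¹ * c * z + (b⁻¹ * c) ^ 2 * (w ^ 2 + w)
              + (2 : F) * (b⁻¹ * c * w * z) := by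
          rw [hz₁, hz₂]; ring
        rw [h20, zero_mul, add_zero, hw, hβa] at hfactor
        rw [hz2] at hfactor
        rcases mul_eq_zero.mp hfactor with h | h
        · left
          linear_combination h - CharTwo.add_self_eq_zero z₁
        · right
          linear_combination h - CharTwo.add_self_eq_zero z₂
      · rintro (rfl | rfl)
        · exact ⟨hmemn w hwq1, hmemq w hw⟩
        · exact ⟨hmemn (w + 1) hw1q1, hmemq (w + 1) hw1sum⟩
    rw [hSeq]
    apply Set.ncard_pair
    rw [hz₁, hz₂]
    intro heq
    have := mul_left_cancel₀ hbc heq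
    exact one_ne_zero (left_eq_add.mp this)
  · -- trace zero case: no solutions
    intro htr
    have hSeq : {z : F | z ^ (q + 1) = 1 ∧
        z ^ 2 + b⁻¹ * c * z + b ^ (q - 1) = 0} = (∅ : Set F) := by
      ext z
      simp only [Set.mem_setOf_eq, Set.mem_empty_iff_false, iff_false, not_and]
      intro hz1 hz2
      have hz0 : z ≠ 0 := by
        intro h0
        rw [h0] at hz2
        have hb0 : b ^ (q - 1) = 0 := by
          simpa using hz2
        exact pow_ne_zero _ hb hb0
      set w : F := b * c⁻¹ * z with hww
      have hwsum : w ^ 2 + w = a := by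
        have hquad : z ^ 2 + b⁻¹ * c * z = b ^ (q - 1) := by
          have h2 := CharTwo.add_self_eq_zero (b ^ (q - 1))
          linear_combination hz2 - h2
        have h1 : w ^ 2 + w = (b * c⁻¹) ^ 2 * (z ^ 2 + b⁻¹ * c * z) := by
          rw [hww]
          field_simp
        rw [h1, hquad, ha]
        field_simp
        linear_combination hbq1
      have hw2 : w ^ 2 = w + a := by
        have h2 := CharTwo.add_self_eq_zero w
        linear_combination hwsum - h2
      have hwq : w ^ q = w := by
        rw [hfrob w hw2, htr, add_zero]
      have hwq1 : w ^ (q + 1) = a := by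
        have e1 : w ^ (q + 1) = (b * c⁻¹) ^ (q + 1) * z ^ (q + 1) := by
          rw [hww, mul_pow]
        rw [hz1, mul_one] at e1
        have e2 : (b * c⁻¹) ^ (q + 1) = a := by
          rw [mul_pow, inv_pow, ha]
          congr 2
          rw [pow_succ, hcq, sq]
        rw [e2] at e1
        exact e1
      have hw2a : w ^ 2 = a := by
        have e3 : w ^ (q + 1) = w ^ 2 := by
          rw [pow_succ, hwq, sq]
        rw [← e3, hwq1]
      have hw0 : w = 0 := by
        have h0a : w + a = 0 + a := by
          rw [zero_add, ← hw2, hw2a]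
        exact add_right_cancel h0a
      exact mul_ne_zero (mul_ne_zero hb (inv_ne_zero hc)) hz0 (by rw [← hww, hw0])
    rw [hSeq, Set.ncard_empty]
end

section
/- Let n = 2m, q = 2^m, and a ∈ 𝔽_{q²} \ 𝔽_q. Set c = a + a^q ∈ 𝔽_q^*. Then for all x ∈ 𝔽_{q²}, Tr₁ⁿ(a x^{2^{m−1}(q+1)}) = Tr₁^m(c² x^{q+1}), where Tr₁ⁿ and Tr₁^m are the absolute traces of 𝔽_{q²} and 𝔽_q respectively. (Note 2^{m−1}(q+1) ≡ 2^{−1}(q+1) in the exponent group modulo q²−1 in the sense that x^{2^{m−1}(q+1)} = (x^{q+1})^{2^{m−1}} and squaring gives x^{q+1}.) -/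
/-- For a ∈ F_{q²} \ F_q and c = a + a^q: Tr_1^n(a x^{2^{m-1}(q+1)}) = Tr_1^m(c² x^{q+1}). -/
theorem stmt_8 (m : ℕ) (hm : 1 ≤ m) (F : Type*) [Field F] [Fintype F]
    (hF : Fintype.card F = (2 ^ m) ^ 2)
    (a : F) (ha : a ^ (2 ^ m) ≠ a) :
    ∀ x : F, FTr F (2 * m) (a * x ^ (2 ^ (m - 1) * (2 ^ m + 1))) =
      FTr F m ((a + a ^ (2 ^ m)) ^ 2 * x ^ (2 ^ m + 1)) := by
  intro x
  haveI hp2 : Fact (Nat.Prime 2) := ⟨Nat.prime_two⟩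
  haveI hchar : CharP F 2 := by
    have h := ringChar.charP F
    have hprime : (ringChar F).Prime := CharP.char_is_prime F (ringChar F)
    have hdvd : ringChar F ∣ Fintype.card F := by
      rw [← CharP.cast_eq_zero_iff F (ringChar F)]
      exact FiniteField.cast_card_eq_zero F
    rw [hF, ← pow_mul] at hdvd
    have h2 : ringChar F = 2 :=
      (Nat.prime_dvd_prime_iff_eq hprime Nat.prime_two).mp
        (hprime.dvd_of_dvd_pow hdvd)
    rwa [h2] at h
  -- every element is fixed by x ↦ x^(q²)
  have hcard : ∀ z : F, z ^ (2 ^ m * 2 ^ m) = z := by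
    intro z
    have := FiniteField.pow_card z
    rwa [hF, sq] at this
  -- squaring is injective
  have hsq_inj : Function.Injective (fun z : F => z ^ 2) := by
    intro z w h
    apply frobenius_inj F 2
    simpa [frobenius_def] using h
  set y : F := x ^ (2 ^ (m - 1) * (2 ^ m + 1)) with hy
  set c : F := a + a ^ (2 ^ m) with hc
  -- y² = x^(q+1)
  have hy2 : y ^ 2 = x ^ (2 ^ m + 1) := by
    have hm1 : m - 1 + 1 = m := Nat.succ_pred_eq_of_pos hm
    have h2e : 2 ^ (m - 1) * (2 ^ m + 1) * 2 = 2 ^ m * 2 ^ m + 2 ^ m := by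
      calc 2 ^ (m - 1) * (2 ^ m + 1) * 2 = 2 ^ (m - 1) * 2 * (2 ^ m + 1) := by ring
        _ = 2 ^ m * (2 ^ m + 1) := by rw [← pow_succ, hm1]
        _ = 2 ^ m * 2 ^ m + 2 ^ m := by ring
    calc y ^ 2 = x ^ (2 ^ (m - 1) * (2 ^ m + 1) * 2) := by rw [hy, ← pow_mul]
      _ = x ^ (2 ^ m * 2 ^ m) * x ^ 2 ^ m := by rw [h2e, pow_add]
      _ = x * x ^ 2 ^ m := by rw [hcard x]
      _ = x ^ (2 ^ m + 1) := by rw [pow_add, pow_one, mul_comm]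
  -- x^(q+1) is fixed by Frobenius^m
  have hfix_pow : (x ^ (2 ^ m + 1)) ^ 2 ^ m = x ^ (2 ^ m + 1) := by
    rw [← pow_mul]
    have he : (2 ^ m + 1) * 2 ^ m = 2 ^ m * 2 ^ m + 2 ^ m := by ring
    rw [he, pow_add, hcard x, pow_add, pow_one, mul_comm]
  -- y is fixed by Frobenius^m
  have hyfix : y ^ 2 ^ m = y := by
    apply hsq_inj
    show (y ^ 2 ^ m) ^ 2 = y ^ 2
    calc (y ^ 2 ^ m) ^ 2 = (y ^ 2) ^ 2 ^ m := pow_right_comm y (2 ^ m) 2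
      _ = x ^ (2 ^ m + 1) := by rw [hy2, hfix_pow]
      _ = y ^ 2 := hy2.symm
  -- c is fixed by Frobenius^m
  have hcfix : c ^ 2 ^ m = c := by
    rw [hc, add_pow_char_pow, ← pow_mul, hcard a, add_comm]
  -- (c*y) is fixed
  have hzfix : (c * y) ^ 2 ^ m = c * y := by
    rw [mul_pow, hcfix, hyfix]
  -- split the long trace
  have hsplit : FTr F (2 * m) (a * y) =
      FTr F m (a * y) + FTr F m (a ^ 2 ^ m * y) := by
    have hay : (a * y) ^ 2 ^ m = a ^ 2 ^ m * y := by rw [mul_pow, hyfix]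
    rw [two_mul]
    unfold FTr
    rw [Finset.sum_range_add]
    congr 1
    apply Finset.sum_congr rfl
    intro i _
    rw [← hay, ← pow_mul, ← pow_add]
  -- merge the two half-traces
  have hmerge : FTr F m (a * y) + FTr F m (a ^ 2 ^ m * y) = FTr F m (c * y) := by
    unfold FTr
    rw [← Finset.sum_add_distrib]
    apply Finset.sum_congr rfl
    intro i _
    rw [hc, add_mul, add_pow_char_pow]
  -- FTr of a square equals FTr for Frobenius^m-fixed elements
  have hshift : FTr F m ((c * y) ^ 2) = FTr F m (c * y) := by
    set z := c * y with hz
    have key : FTr F m z + z ^ 2 ^ m = z + FTr F m (z ^ 2) := by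
      unfold FTr
      rw [← Finset.sum_range_succ (fun i => z ^ 2 ^ i) m,
        Finset.sum_range_succ' (fun i => z ^ 2 ^ i) m]
      rw [pow_zero, pow_one, add_comm]
      congr 1
      apply Finset.sum_congr rfl
      intro i _
      rw [← pow_mul, pow_succ, mul_comm (2 ^ i) 2]
    rw [hzfix] at key
    have := key.symm
    rw [add_comm z (FTr F m (z ^ 2))] at this
    exact add_right_cancel this
  calc FTr F (2 * m) (a * y) = FTr F m (c * y) := by rw [hsplit, hmerge]
    _ = FTr F m ((c * y) ^ 2) := hshift.symm
    _ = FTr F m (c ^ 2 * x ^ (2 ^ m + 1)) := by rw [mul_pow, hy2]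
end

section
/- Let n = 2m, q = 2^m, u a generator of μ_{q+1}, and c ∈ 𝔽_q^*. Let a_i ∈ 𝔽_{q²} and integers s_i with 0 ≤ s_i ≤ q satisfy a_i u^{i(1−2s_i)} + a_i^q u^{i(2s_i−1)} = c for every i = 0,…,q. Define f : 𝔽_{q²} → 𝔽₂ by f(0) = 0 and f(x) = Tr₁ⁿ(a_i x^{s_i(q−1)+1}) for x ∈ u^i 𝔽_q^*. Then f is bent, and its Walsh transform satisfies Σ_{x∈𝔽_{q²}}(−1)^{f(x)+Tr₁ⁿ(bx)} = q·(−1)^{Tr₁^m(c^{−2} b^{q+1})+1} for all b ∈ 𝔽_{q²}; in particular the dual of f is b ↦ Tr₁^m(c^{−2} b^{q+1}) + 1. -/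
open scoped Classical

/-- The additive character sign (-1)^y for y in the prime field {0,1}. -/
noncomputable def chi (F : Type*) [Field F] (y : F) : ℤ :=
  if y = 0 then 1 else -1

section Aux
variable {F : Type*} [Field F]

lemma ftr_zero (k : ℕ) : FTr F k 0 = 0 := by
  unfold FTr
  exact Finset.sum_eq_zero fun i _ => zero_pow (by positivity)

lemma frob_add [CharP F 2] (k : ℕ) (x y : F) : (x + y) ^ 2 ^ k = x ^ 2 ^ k + y ^ 2 ^ k :=
  add_pow_char_pow x y 2 k

lemma ftr_add [CharP F 2] (k : ℕ) (x y : F) :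
    FTr F k (x + y) = FTr F k x + FTr F k y := by
  unfold FTr
  rw [← Finset.sum_add_distrib]
  exact Finset.sum_congr rfl fun i _ => frob_add i x y

lemma sq_inj [CharP F 2] {a b : F} (h : a ^ 2 = b ^ 2) : a = b := by
  have := frobenius_inj F 2
  apply this
  simpa [frobenius_def] using h

lemma ftr_sq_aux (k : ℕ) (t : F) : FTr F k (t ^ 2) + t = FTr F k t + t ^ 2 ^ k := by
  have h1 : ∀ i : ℕ, (t ^ 2) ^ 2 ^ i = t ^ 2 ^ (i + 1) := fun i => by
    rw [← pow_mul, pow_succ, mul_comm]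
  unfold FTr
  calc (∑ i ∈ Finset.range k, (t ^ 2) ^ 2 ^ i) + t
      = ∑ i ∈ Finset.range k, t ^ 2 ^ (i + 1) + t ^ 2 ^ 0 := by
        simp only [pow_zero, pow_one]
        exact congrArg (· + t) (Finset.sum_congr rfl fun i _ => h1 i)
    _ = ∑ i ∈ Finset.range (k + 1), t ^ 2 ^ i := (Finset.sum_range_succ' (fun i => t ^ 2 ^ i) k).symm
    _ = ∑ i ∈ Finset.range k, t ^ 2 ^ i + t ^ 2 ^ k := Finset.sum_range_succ _ k

lemma ftr_sq (k : ℕ) (t : F) (ht : t ^ 2 ^ k = t) : FTr F k (t ^ 2) = FTr F k t := by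
  have := ftr_sq_aux k t
  rw [ht] at this
  exact add_right_cancel this

lemma ftr_idem [CharP F 2] (k : ℕ) (t : F) (ht : t ^ 2 ^ k = t) :
    FTr F k t = 0 ∨ FTr F k t = 1 := by
  have hsq : (FTr F k t) ^ 2 = FTr F k t := by
    have h1 : (FTr F k t) ^ 2 = FTr F k (t ^ 2) := by
      unfold FTr
      rw [sum_pow_char]
      exact Finset.sum_congr rfl fun i _ => by rw [← pow_mul, ← pow_mul, mul_comm]
    rw [h1, ftr_sq k t ht]
  set w := FTr F k t
  have h3 : w * (w - 1) = 0 := by linear_combination hsq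
  rcases mul_eq_zero.mp h3 with h | h
  · exact Or.inl h
  · exact Or.inr (sub_eq_zero.mp h)

lemma chi_add [CharP F 2] {x y : F} (hx : x = 0 ∨ x = 1) (hy : y = 0 ∨ y = 1) :
    chi F (x + y) = chi F x * chi F y := by
  have h2 : (1 : F) + 1 = 0 := by
    have := CharP.cast_eq_zero F 2
    push_cast at this
    linear_combination this
  rcases hx with rfl | rfl <;> rcases hy with rfl | rfl <;>
    simp [chi, h2, one_ne_zero]

lemma chi_succ [CharP F 2] {x : F} (hx : x = 0 ∨ x = 1) :
    chi F (x + 1) = - chi F x := by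
  have h2 : (1 : F) + 1 = 0 := by
    have := CharP.cast_eq_zero F 2
    push_cast at this
    linear_combination this
  rcases hx with rfl | rfl <;> simp [chi, h2, one_ne_zero]

lemma chi_abs (x : F) : |chi F x| = 1 := by
  unfold chi; split <;> simp

lemma ftr_split (m : ℕ) (z : F) :
    FTr F (2 * m) z = FTr F m z + FTr F m (z ^ 2 ^ m) := by
  unfold FTr
  have h1 : ∀ i : ℕ, (z ^ 2 ^ m) ^ 2 ^ i = z ^ 2 ^ (m + i) := fun i => by
    rw [← pow_mul, pow_add]
  rw [two_mul, Finset.sum_range_add (fun i => z ^ 2 ^ i) m m]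
  exact congrArg _ (Finset.sum_congr rfl fun i _ => (h1 i).symm)

lemma exists_pow_eq [Fintype F] {u z : F} {n : ℕ} (hn : 0 < n) (hu : orderOf u = n)
    (hz : z ^ n = 1) : ∃ i : Fin n, z = u ^ (i : ℕ) := by
  classical
  have hun : u ^ n = 1 := hu ▸ pow_orderOf_eq_one u
  set S : Finset F := Finset.image (fun i : Fin n => u ^ (i : ℕ)) Finset.univ with hS
  have hcard : S.card = n := by
    rw [hS, Finset.card_image_of_injOn, Finset.card_univ, Fintype.card_fin]
    intro i _ j _ hij
    exact Fin.ext (pow_injOn_Iio_orderOf (by simp [hu, i.2]) (by simp [hu, j.2]) hij)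
  have hsub : S ⊆ (Polynomial.nthRoots n (1 : F)).toFinset := by
    intro w hw
    rw [hS, Finset.mem_image] at hw
    obtain ⟨i, _, rfl⟩ := hw
    rw [Multiset.mem_toFinset, Polynomial.mem_nthRoots hn, ← pow_mul, mul_comm, pow_mul, hun,
      one_pow]
  have heq : S = (Polynomial.nthRoots n (1 : F)).toFinset := by
    refine Finset.eq_of_subset_of_card_le hsub ?_
    rw [hcard]
    exact le_trans (Multiset.toFinset_card_le _) (Polynomial.card_nthRoots n 1)
  have hzS : z ∈ S := by
    rw [heq, Multiset.mem_toFinset, Polynomial.mem_nthRoots hn]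
    exact hz
  rw [hS, Finset.mem_image] at hzS
  obtain ⟨i, _, h⟩ := hzS
  exact ⟨i, h.symm⟩

lemma exists_tr_ne_zero [Fintype F] {k : ℕ} (hk : 1 ≤ k)
    (hcard : Fintype.card F = 2 ^ (2 * k)) : ∃ z : F, FTr F (2 * k) z ≠ 0 := by
  by_contra h
  push_neg at h
  set P : Polynomial F := ∑ i ∈ Finset.range (2 * k), Polynomial.X ^ 2 ^ i with hP
  have hev : ∀ z : F, P.eval z = 0 := by
    intro z
    have := h z
    unfold FTr at this
    simpa [hP, Polynomial.eval_finset_sum] using this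
  have hdeg : P.natDegree < Fintype.card F := by
    rw [hcard]
    refine lt_of_le_of_lt (Polynomial.natDegree_sum_le_of_forall_le _ _ (fun i hi => ?_))
      (Nat.pow_lt_pow_right one_lt_two (by omega : 2 * k - 1 < 2 * k))
    rw [Polynomial.natDegree_X_pow]
    exact Nat.pow_le_pow_right (by norm_num) (by
      have := Finset.mem_range.mp hi; omega)
  have hP0 : P = 0 :=
    Polynomial.eq_zero_of_natDegree_lt_card_of_eval_eq_zero P Function.injective_id
      (fun z => hev z) hdeg
  have hc1 : P.coeff 1 = 1 := by
    rw [hP, Polynomial.finset_sum_coeff]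
    rw [Finset.sum_congr rfl (fun i _ => Polynomial.coeff_X_pow (2 ^ i) 1)]
    rw [Finset.sum_eq_single 0]
    · norm_num
    · intro b _ hb
      have : 2 ^ b ≠ 1 := Nat.ne_of_gt (Nat.one_lt_two_pow hb)
      simp [this, Ne.symm this]
    · intro habs
      exact absurd (Finset.mem_range.mpr (by omega)) habs
  rw [hP0] at hc1
  simp at hc1

end Aux

/-- Niho branch functions with a_i u^{i(1-2s_i)} + a_i^q u^{i(2s_i-1)} = c ∈ F_q^* for all i:
f is bent with Walsh transform q·(-1)^{Tr_1^m(c^{-2} b^{q+1}) + 1}. -/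
theorem stmt_15 (m : ℕ) (hm : 1 ≤ m) (F : Type*) [Field F] [Fintype F]
    (hF : Fintype.card F = (2 ^ m) ^ 2)
    (u : F) (hu : orderOf u = 2 ^ m + 1)
    (c : F) (hc : c ≠ 0) (hcq : c ^ (2 ^ m) = c)
    (a : Fin (2 ^ m + 1) → F) (s : Fin (2 ^ m + 1) → ℕ) (hs : ∀ i, s i ≤ 2 ^ m)
    (hac : ∀ i : Fin (2 ^ m + 1),
      a i * u ^ (((i : ℕ) : ℤ) * (1 - 2 * (s i : ℤ))) +
        (a i) ^ (2 ^ m) * u ^ (((i : ℕ) : ℤ) * (2 * (s i : ℤ) - 1)) = c)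
    (f : F → F) (hf0 : f 0 = 0)
    (hf : ∀ i : Fin (2 ^ m + 1), ∀ y : F, y ^ (2 ^ m - 1) = 1 →
      f (u ^ (i : ℕ) * y) =
        FTr F (2 * m) (a i * (u ^ (i : ℕ) * y) ^ (s i * (2 ^ m - 1) + 1))) :
    (∀ b : F, |∑ x : F, chi F (f x + FTr F (2 * m) (b * x))| = (2 ^ m : ℤ)) ∧
      ∀ b : F, ∑ x : F, chi F (f x + FTr F (2 * m) (b * x)) =
        (2 ^ m : ℤ) * chi F (FTr F m ((c ^ 2)⁻¹ * b ^ (2 ^ m + 1)) + 1) := by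
  classical
  have hq1 : (1 : ℕ) ≤ 2 ^ m := Nat.one_le_two_pow
  -- characteristic 2
  have hchar : CharP F 2 := by
    obtain ⟨p, hp⟩ := CharP.exists F
    haveI := hp
    have hprime : p.Prime := CharP.char_is_prime F p
    obtain ⟨n, -, hcard⟩ := FiniteField.card F p
    have hdvd : p ∣ 2 ^ (m * 2) := by
      have h1 : p ∣ Fintype.card F := hcard ▸ dvd_pow_self p n.pos.ne'
      rwa [hF, ← pow_mul] at h1
    have hp2 : p = 2 :=
      (Nat.prime_dvd_prime_iff_eq hprime Nat.prime_two).mp (hprime.dvd_of_dvd_pow hdvd)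
    rw [← hp2]; exact hp
  haveI := hchar
  have h2 : (2 : F) = 0 := by exact_mod_cast CharP.cast_eq_zero F 2
  have hcard2 : Fintype.card F = 2 ^ (2 * m) := by rw [hF, ← pow_mul, mul_comm]
  have hpc : ∀ x : F, x ^ 2 ^ (2 * m) = x := by
    intro x
    have := FiniteField.pow_card x
    rwa [hcard2] at this
  have hpc2 : ∀ x : F, (x ^ 2 ^ m) ^ 2 ^ m = x := by
    intro x
    rw [← pow_mul, ← pow_add, ← two_mul]
    exact hpc x
  have hsqrt : ∀ z : F, (z ^ 2 ^ (2 * m - 1)) ^ 2 = z := by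
    intro z
    rw [← pow_mul, ← pow_succ]
    have : 2 * m - 1 + 1 = 2 * m := by omega
    rw [this]
    exact hpc z
  have hu1 : u ^ (2 ^ m + 1) = 1 := hu ▸ pow_orderOf_eq_one u
  have hu0 : u ≠ 0 := by
    intro h
    rw [h, zero_pow (by positivity)] at hu1
    exact zero_ne_one hu1
  -- norms of decomposed elements
  have hnorm : ∀ (j : ℕ) (y : F), y ^ 2 ^ m = y → (u ^ j * y) ^ (2 ^ m + 1) = y ^ 2 := by
    intro j y hy
    rw [mul_pow, pow_right_comm, hu1, one_pow, one_mul, pow_succ, hy, sq]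
  have hnfix : ∀ x : F, (x ^ (2 ^ m + 1)) ^ 2 ^ m = x ^ (2 ^ m + 1) := by
    intro x
    calc (x ^ (2 ^ m + 1)) ^ 2 ^ m = x ^ ((2 ^ m + 1) * 2 ^ m) := (pow_mul x _ _).symm
      _ = x ^ (2 ^ m * 2 ^ m + 2 ^ m) := by
          rw [(by ring : (2 ^ m + 1) * 2 ^ m = 2 ^ m * 2 ^ m + 2 ^ m)]
      _ = x ^ (2 ^ m * 2 ^ m) * x ^ 2 ^ m := pow_add x _ _
      _ = x * x ^ 2 ^ m := by rw [pow_mul, hpc2 x]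
      _ = x ^ (2 ^ m + 1) := by rw [pow_succ, mul_comm]
  -- decomposition of nonzero elements
  have hdec : ∀ x : F, x ≠ 0 → ∃ (i : Fin (2 ^ m + 1)) (y : F),
      y ^ 2 ^ m = y ∧ y ≠ 0 ∧ x = u ^ (i : ℕ) * y := by
    intro x hx
    have hxq : x ^ (2 ^ m + 1) ≠ 0 := pow_ne_zero _ hx
    set y := (x ^ (2 ^ m + 1)) ^ 2 ^ (2 * m - 1) with hy
    have hy2 : y ^ 2 = x ^ (2 ^ m + 1) := hsqrt _
    have hxfix : (x ^ (2 ^ m + 1)) ^ 2 ^ m = x ^ (2 ^ m + 1) := hnfix x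
    have hyq : y ^ 2 ^ m = y := by
      apply sq_inj
      calc (y ^ 2 ^ m) ^ 2 = (y ^ 2) ^ 2 ^ m := pow_right_comm y _ 2
        _ = (x ^ (2 ^ m + 1)) ^ 2 ^ m := by rw [hy2]
        _ = x ^ (2 ^ m + 1) := hxfix
        _ = y ^ 2 := hy2.symm
    have hy0 : y ≠ 0 := by
      intro h
      rw [h] at hy2
      exact hxq (by rw [← hy2]; ring)
    have hz : (x * y⁻¹) ^ (2 ^ m + 1) = 1 := by
      have hyq1 : y ^ (2 ^ m + 1) = x ^ (2 ^ m + 1) := by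
        rw [pow_succ, hyq, ← sq, hy2]
      rw [mul_pow, inv_pow, hyq1, mul_inv_cancel₀ hxq]
    obtain ⟨i, hi⟩ := exists_pow_eq (by positivity) hu hz
    refine ⟨i, y, hyq, hy0, ?_⟩
    rw [← hi]
    field_simp
  -- the function is the norm-trace function
  have hfg : ∀ x : F, f x = FTr F m (c ^ 2 * x ^ (2 ^ m + 1)) := by
    intro x
    by_cases hx : x = 0
    · rw [hx, hf0, zero_pow (by positivity), mul_zero, ftr_zero]
    obtain ⟨i, y, hyq, hy0, rfl⟩ := hdec x hx
    have hym1 : y ^ (2 ^ m - 1) = 1 := by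
      have h1 : y ^ (2 ^ m - 1) * y = 1 * y := by
        rw [← pow_succ, Nat.sub_add_cancel hq1, one_mul]
        exact hyq
      exact mul_right_cancel₀ hy0 h1
    rw [hf i y hym1]
    set I : ℤ := ((i : ℕ) : ℤ) with hI
    set S : ℤ := ((s i : ℕ) : ℤ) with hS
    have humod : ∀ A B : ℤ, u ^ (A + B * ((2:ℤ) ^ m + 1)) = u ^ A := by
      intro A B
      rw [zpow_add₀ hu0, mul_comm B, zpow_mul,
        (by push_cast; ring : ((2:ℤ) ^ m + 1) = ((2 ^ m + 1 : ℕ) : ℤ)), zpow_natCast, hu1,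
        one_zpow, mul_one]
    have hupows : ∀ (N : ℕ) (A B : ℤ), (N : ℤ) = A + B * ((2:ℤ) ^ m + 1) → u ^ N = u ^ A := by
      intro N A B hN
      rw [← zpow_natCast u N, hN, humod]
    have hyE : y ^ (s i * (2 ^ m - 1) + 1) = y := by
      rw [pow_succ, mul_comm (s i) (2 ^ m - 1), pow_mul, hym1, one_pow, one_mul]
    have hSub : ((2 ^ m - 1 : ℕ) : ℤ) = (2:ℤ) ^ m - 1 := by
      rw [Nat.cast_sub hq1]; push_cast; ring
    have hA1 : u ^ ((i : ℕ) * (s i * (2 ^ m - 1) + 1)) = u ^ (I * (1 - 2 * S)) := by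
      apply hupows _ _ (I * S)
      push_cast [hSub]
      ring
    have hA2 : (u ^ (I * (1 - 2 * S))) ^ 2 ^ m = u ^ (I * (2 * S - 1)) := by
      rw [← zpow_natCast (u ^ (I * (1 - 2 * S))) (2 ^ m), ← zpow_mul]
      have he : I * (1 - 2 * S) * ((2 ^ m : ℕ) : ℤ)
          = I * (2 * S - 1) + (I * (1 - 2 * S)) * ((2:ℤ) ^ m + 1) := by push_cast; ring
      rw [he, humod]
    have harg : a i * (u ^ (i : ℕ) * y) ^ (s i * (2 ^ m - 1) + 1)
        = (a i * u ^ (I * (1 - 2 * S))) * y := by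
      rw [mul_pow, ← pow_mul, hA1, hyE, mul_assoc]
    rw [harg]
    have hAq : ((a i * u ^ (I * (1 - 2 * S))) * y) ^ 2 ^ m
        = ((a i) ^ 2 ^ m * u ^ (I * (2 * S - 1))) * y := by
      rw [mul_pow, mul_pow, hA2, hyq]
    rw [ftr_split m _, hAq, ← ftr_add]
    have hsum : (a i * u ^ (I * (1 - 2 * S))) * y + ((a i) ^ 2 ^ m * u ^ (I * (2 * S - 1))) * y
        = c * y := by
      rw [← add_mul]
      congr 1
      exact hac i
    rw [hsum]
    have hcyK : (c * y) ^ 2 ^ m = c * y := by rw [mul_pow, hcq, hyq]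
    rw [hnorm (i : ℕ) y hyq, ← mul_pow, ftr_sq m (c * y) hcyK]
  -- the zero-Walsh value
  have hδ0 : (c ^ 2 : F) ≠ 0 := pow_ne_zero 2 hc
  have hδq : (c ^ 2 : F) ^ 2 ^ m = c ^ 2 := by
    rw [← pow_mul, mul_comm 2 (2 ^ m), pow_mul, hcq]
  have hδinvq : ((c ^ 2 : F)⁻¹) ^ 2 ^ m = (c ^ 2)⁻¹ := by rw [inv_pow, hδq]
  have hadd_self : ∀ w : F, w + w = 0 := by
    intro w; rw [← two_mul, h2, zero_mul]
  set K0f : Finset F := Finset.univ.filter (fun t => t ^ 2 ^ m = t ∧ t ≠ 0) with hK0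
  set Kf : Finset F := Finset.univ.filter (fun t => t ^ 2 ^ m = t) with hK
  have hKS : ∑ t ∈ Kf, chi F (FTr F m t) = 0 := by
    obtain ⟨z, hz⟩ := exists_tr_ne_zero hm hcard2
    have hzK : z ^ 2 ^ (2 * m) = z := hpc z
    set t0 := z + z ^ 2 ^ m with ht0
    have ht0K : t0 ^ 2 ^ m = t0 := by
      rw [ht0, frob_add, hpc2 z, add_comm]
    have ht0v : FTr F m t0 = 1 := by
      have h1 : FTr F m t0 = FTr F (2 * m) z := by rw [ht0, ftr_add, ← ftr_split]
      rcases ftr_idem (2 * m) z hzK with h | h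
      · exact absurd h hz
      · rw [h1, h]
    have hswap : ∑ t ∈ Kf, chi F (FTr F m t) = ∑ t ∈ Kf, chi F (FTr F m (t + t0)) := by
      refine Finset.sum_nbij' (fun t => t + t0) (fun t => t + t0) ?_ ?_ ?_ ?_ ?_
      · intro t ht
        simp only [hK, Finset.mem_filter, Finset.mem_univ, true_and] at ht ⊢
        rw [frob_add, ht, ht0K]
      · intro t ht
        simp only [hK, Finset.mem_filter, Finset.mem_univ, true_and] at ht ⊢
        rw [frob_add, ht, ht0K]
      · intro t _
        show t + t0 + t0 = t
        rw [add_assoc, hadd_self, add_zero]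
      · intro t _
        show t + t0 + t0 = t
        rw [add_assoc, hadd_self, add_zero]
      · intro t _
        show chi F (FTr F m t) = chi F (FTr F m (t + t0 + t0))
        rw [add_assoc, hadd_self, add_zero]
    have hneg : ∀ t ∈ Kf, chi F (FTr F m (t + t0)) = - chi F (FTr F m t) := by
      intro t ht
      simp only [hK, Finset.mem_filter, Finset.mem_univ, true_and] at ht
      rw [ftr_add, ht0v, chi_succ (ftr_idem m t ht)]
    rw [Finset.sum_congr rfl hneg, Finset.sum_neg_distrib] at hswap
    omega
  have hK0S : ∑ t ∈ K0f, chi F (FTr F m t) = -1 := by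
    have h0K : (0 : F) ∈ Kf := by
      simp only [hK, Finset.mem_filter, Finset.mem_univ, true_and]
      exact zero_pow (by positivity)
    have hins : Kf = insert 0 K0f := by
      ext t
      simp only [hK, hK0, Finset.mem_insert, Finset.mem_filter, Finset.mem_univ, true_and]
      constructor
      · intro h
        by_cases h0 : t = 0
        · exact Or.inl h0
        · exact Or.inr ⟨h, h0⟩
      · rintro (rfl | ⟨h, _⟩)
        · exact zero_pow (by positivity)
        · exact h
    have h0notin : (0 : F) ∉ K0f := by
      simp [hK0]
    have hchi0 : chi F (0 : F) = 1 := by simp [chi]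
    have h1 := hKS
    rw [hins, Finset.sum_insert h0notin, ftr_zero, hchi0] at h1
    omega
  have hSy : ∑ y ∈ K0f, chi F (FTr F m (c ^ 2 * y ^ 2)) = -1 := by
    rw [← hK0S]
    refine Finset.sum_nbij' (fun y => c ^ 2 * y ^ 2) (fun t => ((c ^ 2)⁻¹ * t) ^ 2 ^ (2 * m - 1))
      ?_ ?_ ?_ ?_ ?_
    · intro t ht
      simp only [hK0, Finset.mem_filter, Finset.mem_univ, true_and] at ht ⊢
      refine ⟨?_, mul_ne_zero hδ0 (pow_ne_zero 2 ht.2)⟩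
      rw [mul_pow, hδq, ← pow_mul, mul_comm 2 (2 ^ m), pow_mul, ht.1]
    · intro t ht
      simp only [hK0, Finset.mem_filter, Finset.mem_univ, true_and] at ht ⊢
      have hw2 : (((c ^ 2)⁻¹ * t) ^ 2 ^ (2 * m - 1)) ^ 2 = (c ^ 2)⁻¹ * t := hsqrt _
      constructor
      · apply sq_inj
        rw [← pow_mul, mul_comm (2 ^ m) 2, pow_mul, hw2, mul_pow, hδinvq, ht.1]
      · intro h
        rw [h] at hw2
        have : (c ^ 2)⁻¹ * t ≠ 0 := mul_ne_zero (inv_ne_zero hδ0) ht.2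
        exact this (by rw [← hw2]; ring)
    · intro t ht
      show ((c ^ 2)⁻¹ * (c ^ 2 * t ^ 2)) ^ 2 ^ (2 * m - 1) = t
      apply sq_inj
      rw [hsqrt, ← mul_assoc, inv_mul_cancel₀ hδ0, one_mul]
    · intro t _
      show c ^ 2 * (((c ^ 2)⁻¹ * t) ^ 2 ^ (2 * m - 1)) ^ 2 = t
      rw [hsqrt, ← mul_assoc, mul_inv_cancel₀ hδ0, one_mul]
    · intro t _
      rfl
  have hW0 : ∑ x : F, chi F (FTr F m (c ^ 2 * x ^ (2 ^ m + 1))) = -((2 : ℤ) ^ m) := by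
    have hsplit := Finset.sum_erase_add Finset.univ
      (fun x : F => chi F (FTr F m (c ^ 2 * x ^ (2 ^ m + 1)))) (Finset.mem_univ 0)
    have h0term : chi F (FTr F m (c ^ 2 * (0 : F) ^ (2 ^ m + 1))) = 1 := by
      rw [zero_pow (by positivity), mul_zero, ftr_zero]
      simp [chi]
    have hmain : ∑ x ∈ Finset.univ.erase (0 : F), chi F (FTr F m (c ^ 2 * x ^ (2 ^ m + 1)))
        = ∑ p ∈ Finset.range (2 ^ m + 1) ×ˢ K0f, chi F (FTr F m (c ^ 2 * (p.2 : F) ^ 2)) := by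
      symm
      refine Finset.sum_bij (fun p _ => u ^ p.1 * p.2) ?_ ?_ ?_ ?_
      · intro p hp
        rw [Finset.mem_product] at hp
        simp only [hK0, Finset.mem_filter, Finset.mem_univ, true_and] at hp
        simp only [Finset.mem_erase, Finset.mem_univ, and_true]
        exact mul_ne_zero (pow_ne_zero _ hu0) hp.2.2
      · intro p hp p' hp' hpp
        rw [Finset.mem_product] at hp hp'
        simp only [hK0, Finset.mem_filter, Finset.mem_univ, true_and, Finset.mem_range]
          at hp hp'
        have h1 : (p.2 : F) ^ 2 = (p'.2 : F) ^ 2 := by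
          have := congrArg (fun w : F => w ^ (2 ^ m + 1)) hpp
          simpa only [hnorm p.1 p.2 hp.2.1, hnorm p'.1 p'.2 hp'.2.1] using this
        have h2 : p.2 = p'.2 := sq_inj h1
        have h3 : u ^ p.1 = u ^ p'.1 := by
          rw [h2] at hpp
          exact mul_right_cancel₀ hp'.2.2 hpp
        have h4 : p.1 = p'.1 :=
          pow_injOn_Iio_orderOf (by simpa [hu] using hp.1) (by simpa [hu] using hp'.1) h3
        exact Prod.ext h4 h2
      · intro x hx
        rw [Finset.mem_erase] at hx
        obtain ⟨i, y, hyq, hy0, rfl⟩ := hdec x hx.1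
        refine ⟨((i : ℕ), y), ?_, rfl⟩
        rw [Finset.mem_product]
        simp only [hK0, Finset.mem_filter, Finset.mem_univ, true_and, Finset.mem_range]
        exact ⟨i.2, hyq, hy0⟩
      · intro p hp
        rw [Finset.mem_product] at hp
        simp only [hK0, Finset.mem_filter, Finset.mem_univ, true_and] at hp
        rw [hnorm p.1 p.2 hp.2.1]
    rw [← hsplit, hmain, Finset.sum_product]
    have hinner : ∀ j ∈ Finset.range (2 ^ m + 1),
        (∑ y ∈ K0f, chi F (FTr F m (c ^ 2 * (y : F) ^ 2))) = -1 := fun j _ => hSy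
    rw [Finset.sum_congr rfl hinner, Finset.sum_const, Finset.card_range]
    simp only [nsmul_eq_mul, h0term]
    push_cast
    ring
  -- the key Walsh computation
  have key : ∀ b : F, ∑ x : F, chi F (f x + FTr F (2 * m) (b * x)) =
      (2 ^ m : ℤ) * chi F (FTr F m ((c ^ 2)⁻¹ * b ^ (2 ^ m + 1)) + 1) := by
    intro b
    set x0 : F := b ^ 2 ^ m * (c ^ 2)⁻¹ with hx0
    have hbb : (b ^ 2 ^ m) ^ 2 ^ m = b := hpc2 b
    have hx0q : x0 ^ 2 ^ m = b * (c ^ 2)⁻¹ := by rw [hx0, mul_pow, hbb, hδinvq]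
    have hTK : ((c ^ 2)⁻¹ * b ^ (2 ^ m + 1)) ^ 2 ^ m = (c ^ 2)⁻¹ * b ^ (2 ^ m + 1) := by
      rw [mul_pow, hδinvq, hnfix b]
    have hXK : ∀ x : F, (c ^ 2 * x ^ (2 ^ m + 1)) ^ 2 ^ m = c ^ 2 * x ^ (2 ^ m + 1) := by
      intro x
      rw [mul_pow, hδq, hnfix x]
    have hpoint : ∀ x : F, chi F (f (x + x0) + FTr F (2 * m) (b * (x + x0)))
        = chi F (FTr F m ((c ^ 2)⁻¹ * b ^ (2 ^ m + 1)))
          * chi F (FTr F m (c ^ 2 * x ^ (2 ^ m + 1))) := by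
      intro x
      rw [hfg (x + x0)]
      have hfield : c ^ 2 * (x + x0) ^ (2 ^ m + 1)
          + (b * (x + x0) + (b * (x + x0)) ^ 2 ^ m)
          = (c ^ 2)⁻¹ * b ^ (2 ^ m + 1) + c ^ 2 * x ^ (2 ^ m + 1) := by
        have hxx : (x + x0) ^ 2 ^ m = x ^ 2 ^ m + b * (c ^ 2)⁻¹ := by
          rw [frob_add, hx0q]
        have hδe : (c ^ 2 : F) * (c ^ 2)⁻¹ = 1 := mul_inv_cancel₀ hδ0
        rw [pow_succ (x + x0), pow_succ x, pow_succ b, hxx, mul_pow b (x + x0), hxx, hx0]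
        linear_combination (x ^ 2 ^ m * b ^ 2 ^ m + b * x + (c ^ 2)⁻¹ * b * b ^ 2 ^ m) * hδe
          + (x ^ 2 ^ m * b ^ 2 ^ m + b * x + (c ^ 2)⁻¹ * b * b ^ 2 ^ m) * h2
      calc chi F (FTr F m (c ^ 2 * (x + x0) ^ (2 ^ m + 1)) + FTr F (2 * m) (b * (x + x0)))
          = chi F (FTr F m ((c ^ 2)⁻¹ * b ^ (2 ^ m + 1)) + FTr F m (c ^ 2 * x ^ (2 ^ m + 1))) := by
            rw [ftr_split m (b * (x + x0)), ← add_assoc, ← ftr_add, ← ftr_add, add_assoc,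
              hfield, ftr_add]
        _ = _ := chi_add (ftr_idem m _ hTK) (ftr_idem m _ (hXK x))
    have hre : ∑ x : F, chi F (f x + FTr F (2 * m) (b * x))
        = ∑ x : F, chi F (f (x + x0) + FTr F (2 * m) (b * (x + x0))) :=
      (Fintype.sum_bijective (fun x : F => x + x0) (Equiv.addRight x0).bijective _ _
        (fun x => rfl)).symm
    rw [hre, Fintype.sum_congr _ _ hpoint, ← Finset.mul_sum, hW0]
    rw [chi_succ (ftr_idem m _ hTK)]
    ring
  refine ⟨fun b => ?_, key⟩
  rw [key b, abs_mul, chi_abs, mul_one, abs_of_nonneg (by positivity)]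
end

section
/- Let q = 2^m, and let x₀ ∈ 𝔽_{q²} satisfy x₀^q + x₀ = 1. For α ∈ 𝔽_q^*, ξ ∈ 𝔽_q, and b ∈ 𝔽_{q²} with b^q + b = αξ + α^{2^{m−1}}, one has Tr₁^m(α ξ² x₀^{q+1} + ((b+b^q)x₀ + b^q)ξ) = Tr₁^m(α^{−1} b^{q+1}) + 1, where Tr₁^m is the absolute trace of 𝔽_q and α^{2^{m−1}} is the square root of α. -/
lemma FTr_add {F : Type*} [Field F] [CharP F 2] (m : ℕ) (x y : F) :
    FTr F m (x + y) = FTr F m x + FTr F m y := by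
  simp [FTr, add_pow_char_pow, Finset.sum_add_distrib]

lemma FTr_sq_add_self {F : Type*} [Field F] [CharP F 2] (m : ℕ) (z : F) :
    FTr F m (z ^ 2 + z) = z ^ 2 ^ m + z := by
  rw [FTr_add]
  have h1 : FTr F m (z ^ 2) = ∑ i ∈ Finset.range m, z ^ 2 ^ (i + 1) := by
    simp only [FTr]
    refine Finset.sum_congr rfl fun i _ => ?_
    rw [← pow_mul, pow_succ, mul_comm (2^i) 2]
  have h2 : ∑ i ∈ Finset.range m, (z ^ 2 ^ (i+1) - z ^ 2 ^ i) = z ^ 2 ^ m - z ^ 2 ^ 0 :=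
    Finset.sum_range_sub (fun i => z ^ 2 ^ i) m
  have := CharTwo.sub_eq_add (R := F)
  simp only [this] at h2
  rw [h1]
  rw [Finset.sum_add_distrib] at h2
  simpa [FTr] using h2

/-- For b with b^q + b = αξ + α^{1/2}:
Tr_1^m(αξ²x₀^{q+1} + ((b+b^q)x₀ + b^q)ξ) = Tr_1^m(α⁻¹ b^{q+1}) + 1. -/
theorem stmt_18 (m : ℕ) (hm : 1 ≤ m) (F : Type*) [Field F] [Fintype F]
    (hF : Fintype.card F = (2 ^ m) ^ 2)
    (x₀ : F) (hx₀ : x₀ ^ (2 ^ m) + x₀ = 1)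
    (α : F) (hα : α ≠ 0) (hαq : α ^ (2 ^ m) = α)
    (ξ : F) (hξ : ξ ^ (2 ^ m) = ξ)
    (b : F) (hb : b ^ (2 ^ m) + b = α * ξ + α ^ (2 ^ (m - 1))) :
    FTr F m (α * ξ ^ 2 * x₀ ^ (2 ^ m + 1) + ((b + b ^ (2 ^ m)) * x₀ + b ^ (2 ^ m)) * ξ) =
      FTr F m (α⁻¹ * b ^ (2 ^ m + 1)) + 1 := by
  -- characteristic 2
  have hcard2 : Fintype.card F % 2 = 0 := by
    rw [hF]
    have : 2 ∣ (2 ^ m) ^ 2 :=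
      dvd_pow (dvd_pow_self 2 (Nat.one_le_iff_ne_zero.mp hm)) two_ne_zero
    obtain ⟨k, hk⟩ := this
    omega
  have hchar : ringChar F = 2 := FiniteField.even_card_iff_char_two.mpr hcard2
  haveI : CharP F 2 := ringChar.of_eq hchar
  have h2 : (2 : F) = 0 := CharTwo.two_eq_zero
  set β : F := α ^ 2 ^ (m - 1) with hβ
  have hβ2 : β ^ 2 = α := by
    have e : 2 ^ (m - 1) * 2 = 2 ^ m := by
      rw [← pow_succ]
      congr 1
      omega
    rw [hβ, ← pow_mul, e, hαq]
  have hβq : β ^ 2 ^ m = β := by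
    rw [hβ, ← pow_mul, mul_comm, pow_mul, hαq]
  have hβ0 : β ≠ 0 := pow_ne_zero _ hα
  have hbq : b ^ 2 ^ m = b + β ^ 2 * ξ + β := by
    linear_combination hb - ξ * hβ2 - b * h2
  have hxq : x₀ ^ 2 ^ m = x₀ + 1 := by
    linear_combination hx₀ - x₀ * h2
  -- rewrite the left argument
  have hA : α * ξ ^ 2 * x₀ ^ (2 ^ m + 1) + ((b + b ^ (2 ^ m)) * x₀ + b ^ (2 ^ m)) * ξ
      = ((β * ξ * x₀) ^ 2 + β * ξ * x₀) + ((β * ξ) ^ 2 + β * ξ) + ξ * b := by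
    rw [pow_succ x₀ (2^m), hxq, hbq]
    linear_combination (ξ^2 * x₀^2 + ξ^2 * x₀) * hβ2 +
      (α * ξ^2 * x₀^2 + α * ξ^2 * x₀ + b * ξ * x₀ - β^2 * ξ^2 * x₀^2) * h2
  -- rewrite the right argument
  have key : α * ((β⁻¹ * b) ^ 2 + β⁻¹ * b + ξ * b) = b ^ (2 ^ m) * b := by
    rw [← hβ2, hbq]
    field_simp
    ring
  have hB : α⁻¹ * b ^ (2 ^ m + 1) = (β⁻¹ * b) ^ 2 + β⁻¹ * b + ξ * b := by
    rw [pow_succ, ← key, inv_mul_cancel_left₀ hα]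
  have hu : (β * ξ) ^ 2 ^ m = β * ξ := by rw [mul_pow, hβq, hξ]
  have hz : (β⁻¹ * b) ^ 2 ^ m = β⁻¹ * b + β * ξ + 1 := by
    rw [mul_pow, inv_pow, hβq, hbq]
    field_simp
  rw [hA, hB,
    FTr_add m (((β*ξ*x₀)^2 + β*ξ*x₀) + ((β*ξ)^2 + β*ξ)) (ξ*b),
    FTr_add m ((β*ξ*x₀)^2 + β*ξ*x₀) ((β*ξ)^2 + β*ξ),
    FTr_add m ((β⁻¹*b)^2 + β⁻¹*b) (ξ*b),
    FTr_sq_add_self, FTr_sq_add_self, FTr_sq_add_self,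
    mul_pow (β * ξ) x₀, hu, hxq, hz]
  linear_combination (β * ξ * x₀ + β * ξ - β⁻¹ * b - 1) * h2
end
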